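/- For smooth exponentially concave φ with portfolio π, written in exponential coordinates, the partial derivatives of f(θ) = φ(θ) + ψ(θ) satisfy ∂f/∂θᵢ = πᵢ(θ) for i = 1, …, n−1. -/

import Mathlib

open Real Finset

/-- The open unit simplex in ℝⁿ. -/
def openSimplex (n : ℕ) : Set (Fin n → ℝ) :=
  {p | (∀ i, 0 < p i) ∧ ∑ i, p i = 1}

/-- `ψ(x) = log(1 + Σ e^{xᵢ})`. -/
noncomputable def psiFun {n : ℕ} (x : Fin n → ℝ) : ℝ :=
  Real.log (1 + ∑ i, Real.exp (x i))

/-- Inverse of the exponential coordinate map: `pᵢ = e^{θᵢ − ψ(θ)}`. -/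
noncomputable def pMap {n : ℕ} (θ : Fin n → ℝ) : Fin (n + 1) → ℝ :=
  fun i => Real.exp ((Fin.snoc θ (0 : ℝ) : Fin (n + 1) → ℝ) i - psiFun θ)

/-- The continuous linear map `x ↦ Σᵢ vᵢ xᵢ` (pairing with the gradient vector `v`). -/
noncomputable def dotCLM {m : ℕ} (v : Fin m → ℝ) : (Fin m → ℝ) →L[ℝ] ℝ :=
  LinearMap.toContinuousLinearMap
    (∑ i, v i • (LinearMap.proj i : (Fin m → ℝ) →ₗ[ℝ] ℝ))

lemma sum_exp_pos {n : ℕ} (θ : Fin n → ℝ) : 0 < 1 + ∑ i, Real.exp (θ i) := by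
  positivity

lemma exp_psi {n : ℕ} (θ : Fin n → ℝ) :
    Real.exp (psiFun θ) = 1 + ∑ i, Real.exp (θ i) :=
  Real.exp_log (sum_exp_pos θ)

lemma hasDerivAt_psi_update {n : ℕ} (θ : Fin n → ℝ) (i : Fin n) :
    HasDerivAt (fun s => psiFun (Function.update θ i s))
      (Real.exp (θ i - psiFun θ)) (θ i) := by
  have hsum : HasDerivAt (fun s => 1 + ∑ j, Real.exp (Function.update θ i s j))
      (Real.exp (θ i)) (θ i) := by
    have : HasDerivAt (fun s => ∑ j, Real.exp (Function.update θ i s j))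
        (∑ j, if j = i then Real.exp (θ i) else 0) (θ i) := by
      apply HasDerivAt.fun_sum
      intro j _
      by_cases h : j = i
      · subst h
        simp only [Function.update_self, if_pos rfl]
        exact Real.hasDerivAt_exp (θ j)
      · simp only [Function.update_of_ne h, if_neg h]
        exact hasDerivAt_const _ _
    simpa using this.const_add (1:ℝ)
  have hlog := hsum.log (ne_of_gt (by simpa using sum_exp_pos θ))
  simp only [Function.update_eq_self] at hlog
  convert hlog using 1
  · rfl
  rw [Real.exp_sub, exp_psi]

lemma pMap_mem {n : ℕ} (θ : Fin n → ℝ) : pMap θ ∈ openSimplex (n + 1) := by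
  constructor
  · intro i; exact Real.exp_pos _
  · have : ∑ i : Fin (n+1), pMap θ i
        = (∑ i : Fin (n+1), Real.exp ((Fin.snoc θ (0:ℝ) : Fin (n+1) → ℝ) i))
          / Real.exp (psiFun θ) := by
      rw [Finset.sum_div]
      refine Finset.sum_congr rfl fun i _ => ?_
      rw [pMap, Real.exp_sub]
    rw [this, Fin.sum_univ_castSucc]
    simp only [Fin.snoc_castSucc, Fin.snoc_last, Real.exp_zero]
    rw [exp_psi, add_comm (∑ i, Real.exp (θ i)) 1]
    exact div_self (ne_of_gt (sum_exp_pos θ))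

lemma dotCLM_apply {m : ℕ} (v w : Fin m → ℝ) : dotCLM v w = ∑ i, v i * w i := by
  simp [dotCLM, LinearMap.sum_apply, smul_eq_mul]

lemma hasDerivAt_pMap_update {n : ℕ} (θ : Fin n → ℝ) (i : Fin n) :
    HasDerivAt (fun s => pMap (Function.update θ i s))
      (fun j => pMap θ j * ((if j = i.castSucc then (1:ℝ) else 0) - pMap θ i.castSucc))
      (θ i) := by
  rw [hasDerivAt_pi]
  intro j
  have hψ := hasDerivAt_psi_update θ i
  have hpI : Real.exp (θ i - psiFun θ) = pMap θ i.castSucc := by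
    simp [pMap, Fin.snoc_castSucc]
  refine Fin.lastCases ?_ ?_ j
  · -- j = last
    have h0 : HasDerivAt (fun s => (0:ℝ) - psiFun (Function.update θ i s))
        (0 - Real.exp (θ i - psiFun θ)) (θ i) :=
      (hasDerivAt_const _ _).sub hψ
    have := h0.exp
    simp only [Function.update_eq_self] at this
    convert this using 2 with s
    · rfl
    · rfl
    · simp [pMap, Fin.snoc_last]
    · simp [pMap, Fin.snoc_last]
    · rw [if_neg (Fin.castSucc_lt_last i).ne', hpI]
  · intro k
    by_cases hk : k = i
    · subst hk
      have hinner : HasDerivAt (fun s => s - psiFun (Function.update θ k s))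
          (1 - Real.exp (θ k - psiFun θ)) (θ k) :=
        (hasDerivAt_id _).sub hψ
      have := hinner.exp
      simp only [Function.update_eq_self] at this
      convert this using 2 with s
      · rfl
      · rfl
      · simp [pMap, Fin.snoc_castSucc]
      · simp [pMap, Fin.snoc_castSucc]
      · rw [if_pos rfl, hpI]
    · have hinner : HasDerivAt (fun s => θ k - psiFun (Function.update θ i s))
          (0 - Real.exp (θ i - psiFun θ)) (θ i) :=
        (hasDerivAt_const _ _).sub hψ
      have := hinner.exp
      simp only [Function.update_eq_self] at this
      convert this using 2 with s
      · rfl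
      · rfl
      · simp [pMap, Fin.snoc_castSucc, Function.update_of_ne hk]
      · simp [pMap, Fin.snoc_castSucc]
      · rw [if_neg (by simpa [Fin.castSucc_inj] using hk : ¬ k.castSucc = i.castSucc), hpI]

theorem partial_f_eq_portfolio (n : ℕ) (φf : (Fin (n + 1) → ℝ) → ℝ)
    (g : (Fin (n + 1) → ℝ) → (Fin (n + 1) → ℝ))
    (hconc : ConcaveOn ℝ (openSimplex (n + 1)) (fun p => Real.exp (φf p)))
    (hgrad : ∀ p ∈ openSimplex (n + 1),
      HasFDerivWithinAt φf (dotCLM (g p)) (openSimplex (n + 1)) p) :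
    ∀ (θ : Fin n → ℝ) (i : Fin n),
      HasDerivAt (fun s : ℝ => φf (pMap (Function.update θ i s))
          + psiFun (Function.update θ i s))
        (pMap θ i.castSucc * (1 + ∑ j, g (pMap θ) j *
          ((if j = i.castSucc then (1:ℝ) else 0) - pMap θ j)))
        (θ i) := by
  intro θ i
  set p := pMap θ with hp
  have hcurve := hasDerivAt_pMap_update θ i
  have hφ := hgrad p (pMap_mem θ)
  have hcomp : HasDerivAt (fun s => φf (pMap (Function.update θ i s)))
      (dotCLM (g p) (fun j => p j * ((if j = i.castSucc then (1:ℝ) else 0)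
        - p i.castSucc))) (θ i) := by
    have hmaps : Set.MapsTo (fun s => pMap (Function.update θ i s)) Set.univ
        (openSimplex (n + 1)) := fun s _ => pMap_mem _
    have hφ' : HasFDerivWithinAt φf (dotCLM (g p)) (openSimplex (n + 1))
        (pMap (Function.update θ i (θ i))) := by
      rw [Function.update_eq_self]; exact hφ
    have h2 := hφ'.comp_hasDerivWithinAt (θ i) hcurve.hasDerivWithinAt hmaps
    rw [← hasDerivWithinAt_univ]
    exact h2
  have hψ := hasDerivAt_psi_update θ i
  have hpI : Real.exp (θ i - psiFun θ) = p i.castSucc := by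
    simp [hp, pMap, Fin.snoc_castSucc]
  have hD := hcomp.add hψ
  rw [hpI] at hD
  convert hD using 1
  · rfl
  · rfl
  · rfl
  rw [dotCLM_apply]
  have key : ∀ j, g p j * (p j * ((if j = i.castSucc then (1:ℝ) else 0) - p i.castSucc))
      = (if j = i.castSucc then g p j * p j else 0) - p i.castSucc * (g p j * p j) := by
    intro j; by_cases h : j = i.castSucc <;> simp [h] <;> ring
  have hsum1 : ∑ j, g p j * (p j * ((if j = i.castSucc then (1:ℝ) else 0)
      - p i.castSucc))
      = g p i.castSucc * p i.castSucc - p i.castSucc * ∑ j, g p j * p j := by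
    simp only [key, Finset.sum_sub_distrib, Finset.sum_ite_eq', Finset.mem_univ,
      if_true, ← Finset.mul_sum]
  have hsum2 : ∑ j, g p j * ((if j = i.castSucc then (1:ℝ) else 0) - p j)
      = g p i.castSucc - ∑ j, g p j * p j := by
    simp only [mul_sub, mul_ite, mul_one, mul_zero, Finset.sum_sub_distrib,
      Finset.sum_ite_eq', Finset.mem_univ, if_true]
  rw [hsum2, hsum1]
  ring
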